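/- Let e_i, e_j, e_k ∈ {0,1} and let τ_i, τ_j, τ_k be unit vectors in ℝ² such that for each ordered pair (a,b) ∈ {(i,j), (j,k), (k,i)} one has ⟨τ_a, τ_b⟩ = −(1/2)·(−1)^{e_a+e_b} and ⟨τ_a, Rτ_b⟩ = −(√3/2)·(−1)^{e_a+e_b}. Suppose real numbers N_i, N_j, N_k, T_i, T_j, T_k satisfy the four identities: T_i = −(1/√3)N_i − (2/√3)(−1)^{e_i+e_j}N_j; T_j = (2/√3)(−1)^{e_i+e_j}N_i + (1/√3)N_j; T_k = −(1/√3)(−1)^{e_i+e_k}N_i + (1/√3)(−1)^{e_j+e_k}N_j; and (−1)^{e_i}N_i + (−1)^{e_j}N_j + (−1)^{e_k}N_k = 0. Then the three vectors coincide: N_i·Rτ_i + T_i·τ_i = N_j·Rτ_j + T_j·τ_j = N_k·Rτ_k + T_k·τ_k. -/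

import Mathlib

open scoped RealInnerProductSpace

/-- The point of `ℝ²` (as `EuclideanSpace ℝ (Fin 2)`) with coordinates `a`, `b`. -/
noncomputable def vec2 (a b : ℝ) : EuclideanSpace ℝ (Fin 2) :=
  (WithLp.equiv 2 (Fin 2 → ℝ)).symm ![a, b]

/-- Counterclockwise rotation by `π/2` in `ℝ²`: `R(a,b) = (−b,a)`. -/
noncomputable def Rot (v : EuclideanSpace ℝ (Fin 2)) : EuclideanSpace ℝ (Fin 2) :=
  vec2 (-(v 1)) (v 0)

/-- Scalar core of the junction lemma, for one pair of curves. -/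
lemma aux_pair (a b c d s eps Ni Nj Ti Tj : ℝ)
    (hs3 : s * s = 3) (hs0 : s ≠ 0) (heps : eps * eps = 1)
    (hn : a * a + b * b = 1)
    (hc : a * c + b * d = -(1/2) * eps)
    (hc2 : a * (-d) + b * c = -(s/2) * eps)
    (hTi : s * Ti = -Ni - 2 * eps * Nj)
    (hTj : s * Tj = 2 * eps * Ni + Nj) :
    (Ni * (-b) + Ti * a = Nj * (-d) + Tj * c) ∧
    (Ni * a + Ti * b = Nj * c + Tj * d) := by
  have hP : Nj * (b * c - a * d) + Tj * (a * c + b * d) - Ti = 0 := by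
    have h : s * (Nj * (b * c - a * d) + Tj * (a * c + b * d) - Ti) = 0 := by
      linear_combination (s*Nj) * hc2 + (s*Tj) * hc - hTi - (eps/2) * hTj
        - (eps/2*Nj) * hs3 - Ni * heps
    exact (mul_eq_zero.mp h).resolve_left hs0
  have hQ : Nj * (a * c + b * d) + Tj * (a * d - b * c) - Ni = 0 := by
    have h : s * (Nj * (a * c + b * d) + Tj * (a * d - b * c) - Ni) = 0 := by
      linear_combination (s*Nj) * hc + (-(s*Tj)) * hc2 + (eps*s/2) * hTj + (s*Ni) * heps
    exact (mul_eq_zero.mp h).resolve_left hs0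
  constructor
  · linear_combination (-a) * hP + b * hQ + (Nj*(-d) + Tj*c) * hn
  · linear_combination (-b) * hP + (-a) * hQ + (Nj*c + Tj*d) * hn

theorem stmt1
    (ei ej ek : ℕ)
    (hei : ei ∈ ({0, 1} : Set ℕ)) (hej : ej ∈ ({0, 1} : Set ℕ)) (hek : ek ∈ ({0, 1} : Set ℕ))
    (τi τj τk : EuclideanSpace ℝ (Fin 2))
    (hτi : ‖τi‖ = 1) (hτj : ‖τj‖ = 1) (hτk : ‖τk‖ = 1)
    (hij : ⟪τi, τj⟫ = -(1/2) * (-1 : ℝ) ^ (ei + ej))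
    (hjk : ⟪τj, τk⟫ = -(1/2) * (-1 : ℝ) ^ (ej + ek))
    (hki : ⟪τk, τi⟫ = -(1/2) * (-1 : ℝ) ^ (ek + ei))
    (hij' : ⟪τi, Rot τj⟫ = -(Real.sqrt 3 / 2) * (-1 : ℝ) ^ (ei + ej))
    (hjk' : ⟪τj, Rot τk⟫ = -(Real.sqrt 3 / 2) * (-1 : ℝ) ^ (ej + ek))
    (hki' : ⟪τk, Rot τi⟫ = -(Real.sqrt 3 / 2) * (-1 : ℝ) ^ (ek + ei))
    (Ni Nj Nk Ti Tj Tk : ℝ)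
    (hTi : Ti = -(1 / Real.sqrt 3) * Ni - (2 / Real.sqrt 3) * (-1 : ℝ) ^ (ei + ej) * Nj)
    (hTj : Tj = (2 / Real.sqrt 3) * (-1 : ℝ) ^ (ei + ej) * Ni + (1 / Real.sqrt 3) * Nj)
    (hTk : Tk = -(1 / Real.sqrt 3) * (-1 : ℝ) ^ (ei + ek) * Ni
          + (1 / Real.sqrt 3) * (-1 : ℝ) ^ (ej + ek) * Nj)
    (hsum : (-1 : ℝ) ^ ei * Ni + (-1 : ℝ) ^ ej * Nj + (-1 : ℝ) ^ ek * Nk = 0) :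
    Ni • Rot τi + Ti • τi = Nj • Rot τj + Tj • τj ∧
    Nj • Rot τj + Tj • τj = Nk • Rot τk + Tk • τk := by
  have key : ∀ u v : EuclideanSpace ℝ (Fin 2), ⟪u, v⟫ = u 0 * v 0 + u 1 * v 1 := by
    intro u v
    simp [PiLp.inner_apply, Fin.sum_univ_two, RCLike.inner_apply]
    ring
  have hR0 : ∀ v : EuclideanSpace ℝ (Fin 2), Rot v 0 = -(v 1) := by
    intro v; simp [Rot, vec2]
  have hR1 : ∀ v : EuclideanSpace ℝ (Fin 2), Rot v 1 = v 0 := by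
    intro v; simp [Rot, vec2]
  have hs3 : Real.sqrt 3 * Real.sqrt 3 = 3 := Real.mul_self_sqrt (by norm_num)
  have hs0 : Real.sqrt 3 ≠ 0 := by positivity
  have hEj : (-1 : ℝ) ^ ej * (-1 : ℝ) ^ ej = 1 := by
    rw [← pow_add]; exact Even.neg_one_pow ⟨ej, rfl⟩
  have hEk : (-1 : ℝ) ^ ek * (-1 : ℝ) ^ ek = 1 := by
    rw [← pow_add]; exact Even.neg_one_pow ⟨ek, rfl⟩
  have heij : (-1 : ℝ) ^ (ei + ej) * (-1 : ℝ) ^ (ei + ej) = 1 := by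
    rw [← pow_add]; exact Even.neg_one_pow ⟨ei + ej, rfl⟩
  have hejk : (-1 : ℝ) ^ (ej + ek) * (-1 : ℝ) ^ (ej + ek) = 1 := by
    rw [← pow_add]; exact Even.neg_one_pow ⟨ej + ek, rfl⟩
  have hni : τi 0 * τi 0 + τi 1 * τi 1 = 1 := by
    have h := real_inner_self_eq_norm_sq τi
    rw [hτi, key] at h; linarith
  have hnj : τj 0 * τj 0 + τj 1 * τj 1 = 1 := by
    have h := real_inner_self_eq_norm_sq τj
    rw [hτj, key] at h; linarith
  rw [key] at hij hjk
  rw [key, hR0 τj, hR1 τj] at hij'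
  rw [key, hR0 τk, hR1 τk] at hjk'
  have hTi' : Real.sqrt 3 * Ti = -Ni - 2 * (-1 : ℝ) ^ (ei + ej) * Nj := by
    rw [hTi]; field_simp
  have hTj' : Real.sqrt 3 * Tj = 2 * (-1 : ℝ) ^ (ei + ej) * Ni + Nj := by
    rw [hTj]; field_simp
  have hTk' : Real.sqrt 3 * Tk = -(-1 : ℝ) ^ (ei + ek) * Ni + (-1 : ℝ) ^ (ej + ek) * Nj := by
    rw [hTk]; field_simp
  have hTj2 : Real.sqrt 3 * Tj = -Nj - 2 * (-1 : ℝ) ^ (ej + ek) * Nk := by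
    linear_combination hTj' + (2 * (-1 : ℝ) ^ ej) * hsum - (2 * Nj) * hEj
  have hTk2 : Real.sqrt 3 * Tk = 2 * (-1 : ℝ) ^ (ej + ek) * Nj + Nk := by
    linear_combination hTk' - ((-1 : ℝ) ^ ek) * hsum + Nk * hEk
  have first := aux_pair (τi 0) (τi 1) (τj 0) (τj 1) (Real.sqrt 3) ((-1 : ℝ) ^ (ei + ej))
    Ni Nj Ti Tj hs3 hs0 heij hni hij hij' hTi' hTj'
  have second := aux_pair (τj 0) (τj 1) (τk 0) (τk 1) (Real.sqrt 3) ((-1 : ℝ) ^ (ej + ek))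
    Nj Nk Tj Tk hs3 hs0 hejk hnj hjk hjk' hTj2 hTk2
  constructor
  · ext l
    fin_cases l
    · simpa [hR0, smul_eq_mul] using first.1
    · simpa [hR1, smul_eq_mul] using first.2
  · ext l
    fin_cases l
    · simpa [hR0, smul_eq_mul] using second.1
    · simpa [hR1, smul_eq_mul] using second.2
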